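/- Suppose Z is a random vector in R^p with E||Z||^4 < ∞ and W = ||Z|| satisfies P[W > E W + t] ≤ exp(-t²/(2v)) for all t > 0. Then for every r > E||Z|| and k ≥ 1, there exists a (k+1)-ary quantizer q of Z such that E||Z - E[Z|q(Z)]||^2 ≤ 4(3r k^{-1/p})^2 + 4·sqrt(E||Z||^4)·exp(-(r - E||Z||)²/(4v)). -/

import Mathlib

open MeasureTheory
open Metric
open scoped ENNReal


lemma sep_card_le {p : ℕ} {r ε : ℝ} (hε : 0 < ε) (hr : 0 < r)
    (s : Finset (EuclideanSpace ℝ (Fin p))) (hs : ∀ c ∈ s, ‖c‖ ≤ r)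
    (hsep : ∀ c ∈ s, ∀ d ∈ s, c ≠ d → ε ≤ dist c d) :
    (s.card : ℝ) ≤ ((ε + 2 * r) / ε) ^ p := by
  let μ : Measure (EuclideanSpace ℝ (Fin p)) := Measure.addHaar
  have hdim : Module.finrank ℝ (EuclideanSpace ℝ (Fin p)) = p := finrank_euclideanSpace_fin
  set δ : ℝ := ε / 2 with hδ
  have hδpos : 0 < δ := by positivity
  set ρ : ℝ := r + ε / 2 with hρ
  have hρpos : 0 < ρ := by positivity
  have D : Set.Pairwise (s : Set (EuclideanSpace ℝ (Fin p)))
      (Function.onFun Disjoint fun c => ball c δ) := by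
    rintro c hc d hd hcd
    exact ball_disjoint_ball (by rw [hδ]; have := hsep c hc d hd hcd; linarith)
  have A_subset : (⋃ c ∈ s, ball c δ) ⊆ ball (0 : EuclideanSpace ℝ (Fin p)) ρ := by
    refine Set.iUnion₂_subset fun x hx => ?_
    apply ball_subset_ball'
    rw [dist_zero_right]
    have h := hs x hx
    have : ε/2 + ‖x‖ ≤ r + ε/2 := by linarith
    simpa [hδ, hρ] using this
  have I : (s.card : ℝ≥0∞) * ENNReal.ofReal (δ ^ p) * μ (ball 0 1) ≤
      ENNReal.ofReal (ρ ^ p) * μ (ball 0 1) := by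
    calc (s.card : ℝ≥0∞) * ENNReal.ofReal (δ ^ p) * μ (ball 0 1)
        = μ (⋃ c ∈ s, ball c δ) := by
          rw [measure_biUnion_finset D fun c _ => measurableSet_ball]
          simp only [μ.addHaar_ball_of_pos _ hδpos, hdim]
          simp [Finset.sum_const, mul_assoc]
      _ ≤ μ (ball 0 ρ) := measure_mono A_subset
      _ = ENNReal.ofReal (ρ ^ p) * μ (ball 0 1) := by
          rw [μ.addHaar_ball_of_pos _ hρpos, hdim]
  have J : (s.card : ℝ≥0∞) * ENNReal.ofReal (δ ^ p) ≤ ENNReal.ofReal (ρ ^ p) :=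
    (ENNReal.mul_le_mul_iff_left (measure_ball_pos _ _ zero_lt_one).ne' measure_ball_lt_top.ne).1 I
  have K : (s.card : ℝ) * δ ^ p ≤ ρ ^ p := by
    have := ENNReal.toReal_le_of_le_ofReal (pow_nonneg hρpos.le _) J
    rw [ENNReal.toReal_mul, ENNReal.toReal_ofReal (pow_nonneg hδpos.le _)] at this
    simpa using this
  have hδp : (0:ℝ) < δ ^ p := pow_pos hδpos p
  have h1 : ((ε + 2*r)/ε) ^ p = ρ ^ p / δ ^ p := by
    rw [← div_pow]
    congr 1
    rw [hρ, hδ]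
    field_simp
    ring
  rw [h1, le_div_iff₀ hδp]
  exact K

lemma exists_net {p : ℕ} {r ε : ℝ} (hε : 0 < ε) (hr : 0 < r) (k : ℕ) (hk : 0 < k)
    (hcount : ((ε + 2 * r) / ε) ^ p ≤ (k : ℝ)) :
    ∃ c : Fin k → EuclideanSpace ℝ (Fin p), ∀ z, ‖z‖ ≤ r → ∃ i, dist z (c i) < ε := by
  classical
  set T : Set ℕ := {n | ∃ s : Finset (EuclideanSpace ℝ (Fin p)),
    (∀ c ∈ s, ‖c‖ ≤ r) ∧ (∀ c ∈ s, ∀ d ∈ s, c ≠ d → ε ≤ dist c d) ∧ s.card = n} with hT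
  have hTk : ∀ n ∈ T, n ≤ k := by
    rintro n ⟨s, h1, h2, rfl⟩
    have := sep_card_le hε hr s h1 h2
    exact_mod_cast this.trans hcount
  have hne : T.Nonempty := ⟨0, ∅, by simp, by simp, by simp⟩
  have hbdd : BddAbove T := ⟨k, fun n hn => hTk n hn⟩
  obtain ⟨s, h1, h2, hcard⟩ : sSup T ∈ T := Nat.sSup_mem hne hbdd
  -- s is a maximal separated set, hence a net
  have hnet : ∀ z : EuclideanSpace ℝ (Fin p), ‖z‖ ≤ r → ∃ y ∈ s, dist z y < ε := by
    intro z hz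
    by_contra hcon
    push_neg at hcon
    have hzs : z ∉ s := fun h => by
      have := hcon z h; rw [dist_self] at this; linarith
    have : s.card + 1 ∈ T := by
      refine ⟨insert z s, ?_, ?_, by rw [Finset.card_insert_of_notMem hzs]⟩
      · intro c hc
        rcases Finset.mem_insert.mp hc with rfl | hc
        · exact hz
        · exact h1 c hc
      · intro c hc d hd hcd
        rcases Finset.mem_insert.mp hc with hc' | hc' <;>
          rcases Finset.mem_insert.mp hd with hd' | hd'
        · exact absurd (hc'.trans hd'.symm) hcd
        · rw [hc']; exact hcon d hd'
        · rw [hd', dist_comm]; exact hcon c hc'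
        · exact h2 c hc' d hd' hcd
    have := le_csSup hbdd this
    omega
  -- enumerate s into Fin k
  have hsk : s.card ≤ k := hTk _ ⟨s, h1, h2, rfl⟩
  set l := s.toList with hl
  refine ⟨fun i => l.getD i 0, fun z hz => ?_⟩
  obtain ⟨y, hy, hd⟩ := hnet z hz
  have hyl : y ∈ l := by rw [hl]; exact Finset.mem_toList.mpr hy
  obtain ⟨j, hjl, hjy⟩ := List.getElem_of_mem hyl
  have hjk : j < k := by
    have : l.length = s.card := Finset.length_toList s
    omega
  refine ⟨⟨j, hjk⟩, ?_⟩
  simpa [List.getD, List.getElem?_eq_getElem hjl, hjy] using hd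

/-- quantizer: existence with all needed properties -/
lemma exists_quantizer {p : ℕ} {r ε : ℝ} (hε : 0 < ε) (hr : 0 < r) (k : ℕ)
    (hcov : ∃ c : Fin k → EuclideanSpace ℝ (Fin p), ∀ z, ‖z‖ ≤ r → ∃ i, dist z (c i) < ε) :
    ∃ (q : EuclideanSpace ℝ (Fin p) → Fin (k + 1)) (c : Fin k → EuclideanSpace ℝ (Fin p)),
      Measurable q ∧
      (∀ z, (q z = Fin.last k ↔ r < ‖z‖)) ∧
      (∀ z i, q z = Fin.castSucc i → dist z (c i) < ε) := by
  classical
  obtain ⟨c, hcov⟩ := hcov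
  have hne : ∀ z : EuclideanSpace ℝ (Fin p), ‖z‖ ≤ r →
      (Finset.univ.filter (fun i => dist z (c i) < ε)).Nonempty := by
    intro z hz
    obtain ⟨i, hi⟩ := hcov z hz
    exact ⟨i, by simp [hi]⟩
  set q : EuclideanSpace ℝ (Fin p) → Fin (k + 1) := fun z =>
    if h : ‖z‖ ≤ r then
      ((Finset.univ.filter (fun i => dist z (c i) < ε)).min' (hne z h)).castSucc
    else Fin.last k with hqdef
  have hlast : ∀ z, q z = Fin.last k ↔ r < ‖z‖ := by
    intro z
    by_cases h : ‖z‖ ≤ r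
    · simp only [hqdef, dif_pos h]
      constructor
      · intro hcontra; exact absurd hcontra (Fin.castSucc_lt_last _).ne
      · intro hcontra; linarith
    · simp only [hqdef, dif_neg h]
      simp at h
      simp [h]
  have hmem : ∀ z i, q z = Fin.castSucc i → dist z (c i) < ε := by
    intro z i hqz
    by_cases h : ‖z‖ ≤ r
    · simp only [hqdef, dif_pos h] at hqz
      have := Fin.castSucc_injective k hqz
      have hm := Finset.min'_mem (Finset.univ.filter (fun j => dist z (c j) < ε)) (hne z h)
      rw [this] at hm
      simpa using hm
    · simp only [hqdef, dif_neg h] at hqz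
      exact absurd hqz.symm (Fin.castSucc_lt_last _).ne
  have hfiber : ∀ j : Fin k, q ⁻¹' {Fin.castSucc j} =
      {z | ‖z‖ ≤ r} ∩ ({z | dist z (c j) < ε} ∩ ⋂ (i : Fin k) (_ : i < j), {z | ¬ dist z (c i) < ε}) := by
    intro j
    ext z
    simp only [Set.mem_preimage, Set.mem_singleton_iff, Set.mem_inter_iff, Set.mem_setOf_eq,
      Set.mem_iInter]
    constructor
    · intro hqz
      by_cases h : ‖z‖ ≤ r
      · simp only [hqdef, dif_pos h] at hqz
        have hj := Fin.castSucc_injective k hqz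
        have hm := Finset.min'_mem (Finset.univ.filter (fun i => dist z (c i) < ε)) (hne z h)
        rw [hj] at hm
        simp only [Finset.mem_filter, Finset.mem_univ, true_and] at hm
        refine ⟨h, hm, fun i hij hdi => ?_⟩
        have : j ≤ i := by
          rw [← hj]
          exact Finset.min'_le _ i (by simp [hdi])
        exact absurd hij (not_lt.mpr this)
      · simp only [hqdef, dif_neg h] at hqz
        exact absurd hqz.symm (Fin.castSucc_lt_last _).ne
    · rintro ⟨h, hdj, hmin⟩
      simp only [hqdef, dif_pos h]
      congr 1
      apply le_antisymm
      · exact Finset.min'_le _ j (by simp [hdj])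
      · by_contra hcon
        push_neg at hcon
        have hm := Finset.min'_mem (Finset.univ.filter (fun i => dist z (c i) < ε)) (hne z h)
        simp only [Finset.mem_filter, Finset.mem_univ, true_and] at hm
        exact hmin _ hcon hm
  have hq : Measurable q := by
    apply measurable_to_countable'
    intro y
    induction y using Fin.lastCases with
    | last =>
      have : q ⁻¹' {Fin.last k} = {z | r < ‖z‖} := by
        ext z; simp [hlast z]
      rw [this]
      exact measurableSet_lt measurable_const measurable_norm
    | cast j =>
      rw [hfiber j]
      refine MeasurableSet.inter (measurableSet_le measurable_norm measurable_const) ?_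
      refine MeasurableSet.inter (measurableSet_lt (measurable_id.dist measurable_const) measurable_const) ?_
      refine MeasurableSet.iInter fun i => MeasurableSet.iInter fun _ => ?_
      exact (measurableSet_lt (measurable_id.dist measurable_const) measurable_const).compl
  exact ⟨q, c, hq, hlast, hmem⟩


lemma cs_helper {Ω : Type*} [MeasurableSpace Ω] (μ : Measure Ω) [IsFiniteMeasure μ]
    {f : Ω → ℝ} (hf : ∀ ω, 0 ≤ f ω) (hf2 : MemLp f 2 μ) (S : Set Ω) :
    (∫ ω in S, f ω ∂μ) ^ 2 ≤ (μ S).toReal * ∫ ω in S, f ω ^ 2 ∂μ := by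
  have hconj : (2:ℝ).HolderConjugate 2 := Real.holderConjugate_iff.mpr ⟨one_lt_two, by norm_num⟩
  have h2 : (ENNReal.ofReal (2:ℝ)) = 2 := by simp [ENNReal.ofReal_ofNat]
  have hH := integral_mul_le_Lp_mul_Lq_of_nonneg (μ := μ.restrict S) hconj
    (Filter.Eventually.of_forall hf) (Filter.Eventually.of_forall (fun _ => zero_le_one))
    (by rw [h2]; exact hf2.restrict S)
    (by rw [h2]; exact memLp_const 1)
  simp only [mul_one, Real.rpow_natCast] at hH
  have hμS : ∫ ω in S, (1:ℝ) ^ (2:ℝ) ∂μ = (μ.restrict S Set.univ).toReal := by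
    simp [Measure.real]
  rw [hμS] at hH
  have h0 : 0 ≤ ∫ ω in S, f ω ∂μ := integral_nonneg hf
  have h1 : 0 ≤ ∫ ω in S, f ω ^ (2:ℝ) ∂μ :=
    integral_nonneg fun ω => Real.rpow_natCast (f ω) 2 ▸ sq_nonneg (f ω)
  calc (∫ ω in S, f ω ∂μ) ^ 2
      ≤ ((∫ ω in S, f ω ^ (2:ℝ) ∂μ) ^ ((1:ℝ)/2) * (μ.restrict S Set.univ).toReal ^ ((1:ℝ)/2)) ^ 2 := by
        apply pow_le_pow_left₀ h0 hH
    _ = (μ S).toReal * ∫ ω in S, f ω ^ 2 ∂μ := by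
        rw [mul_pow, ← Real.rpow_natCast ((∫ ω in S, f ω ^ (2:ℝ) ∂μ) ^ ((1:ℝ)/2)) 2,
          ← Real.rpow_natCast ((μ.restrict S Set.univ).toReal ^ ((1:ℝ)/2)) 2,
          ← Real.rpow_mul h1, ← Real.rpow_mul ENNReal.toReal_nonneg]
        norm_num
        rw [mul_comm]


lemma condexp_comap_discrete {Ω : Type*} [mΩ : MeasurableSpace Ω] (μ : Measure Ω) [IsFiniteMeasure μ]
    {n : ℕ} {E : Type*} [NormedAddCommGroup E] [NormedSpace ℝ E] [CompleteSpace E]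
    [SecondCountableTopology E] [MeasurableSpace E] [BorelSpace E]
    (Y : Ω → Fin (n + 1)) (hY : Measurable Y) (Z : Ω → E) (hZint : Integrable Z μ) :
    μ[Z | MeasurableSpace.comap Y inferInstance] =ᵐ[μ]
      fun ω => (μ (Y ⁻¹' {Y ω})).toReal⁻¹ • ∫ x in Y ⁻¹' {Y ω}, Z x ∂μ := by
  classical
  have hm : MeasurableSpace.comap Y inferInstance ≤ mΩ := hY.comap_le
  haveI : SigmaFinite (μ.trim hm) := by
    haveI := isFiniteMeasure_trim (μ := μ) hm
    infer_instance
  set A : Fin (n + 1) → Set Ω := fun i => Y ⁻¹' {i} with hA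
  have hAmeas : ∀ i, MeasurableSet (A i) := fun i => hY (measurableSet_singleton i)
  set v : Fin (n + 1) → E := fun i => (μ (A i)).toReal⁻¹ • ∫ x in A i, Z x ∂μ with hv
  set G : Ω → E := fun ω => v (Y ω) with hG
  have hYm : Measurable[MeasurableSpace.comap Y inferInstance] Y :=
    Measurable.of_comap_le le_rfl
  have hGm : Measurable[MeasurableSpace.comap Y inferInstance] G :=
    (measurable_from_top (f := v)).comp hYm
  have hGmeas : Measurable G := (measurable_from_top (f := v)).comp hY
  -- G is bounded hence integrable
  have hGbdd : ∀ ω, ‖G ω‖ ≤ ∑ i : Fin (n+1), ‖v i‖ := by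
    intro ω
    exact Finset.single_le_sum (f := fun i => ‖v i‖) (fun i _ => norm_nonneg _)
      (Finset.mem_univ (Y ω))
  have hGint : Integrable G μ := by
    refine Integrable.mono' (integrable_const (∑ i : Fin (n+1), ‖v i‖))
      hGmeas.aestronglyMeasurable (Filter.Eventually.of_forall hGbdd)
  -- per-cell integral equality
  have hcell : ∀ i, ∫ x in A i, G x ∂μ = ∫ x in A i, Z x ∂μ := by
    intro i
    have h1 : ∫ x in A i, G x ∂μ = ∫ x in A i, v i ∂μ := by
      refine setIntegral_congr_fun (hAmeas i) fun ω hω => ?_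
      have : Y ω = i := hω
      simp [hG, this]
    rw [h1, setIntegral_const, measureReal_def]
    by_cases h0 : μ (A i) = 0
    · rw [h0]
      have : μ.restrict (A i) = 0 := Measure.restrict_eq_zero.mpr h0
      simp [this]
    · rw [hv]
      simp only [smul_smul]
      rw [mul_inv_cancel₀ (by simp [ENNReal.toReal_ne_zero, h0, measure_ne_top μ _]), one_smul]
  refine (ae_eq_condExp_of_forall_setIntegral_eq hm hZint ?_ ?_ ?_).symm
  · intro s _ _
    exact hGint.integrableOn
  · rintro s ⟨t, -, rfl⟩ -
    have hsU : Y ⁻¹' t = ⋃ i ∈ t.toFinset, A i := by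
      ext ω
      simp [hA, Set.mem_toFinset]
    rw [hsU, integral_biUnion_finset _ (fun i _ => hAmeas i) ?_ (fun i _ => hGint.integrableOn),
      integral_biUnion_finset _ (fun i _ => hAmeas i) ?_ (fun i _ => hZint.integrableOn)]
    · exact Finset.sum_congr rfl fun i _ => hcell i
    · intro i _ j _ hij
      simp only [Function.onFun, hA]
      exact Set.disjoint_left.mpr fun ω h1 h2 => hij ((Set.mem_preimage.mp h1).symm.trans h2)
    · intro i _ j _ hij
      simp only [Function.onFun, hA]
      exact Set.disjoint_left.mpr fun ω h1 h2 => hij ((Set.mem_preimage.mp h1).symm.trans h2)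
  · exact StronglyMeasurable.aestronglyMeasurable (hGm.stronglyMeasurable)

set_option maxHeartbeats 1000000 in
/-- High-resolution achievability bound under a subgaussian tail assumption on
`‖Z‖`: for every `r > E‖Z‖` and `k ≥ 1` there is a `(k+1)`-ary quantizer of `Z`
whose expected conditional-mean reconstruction error is at most
`4(3r k^{-1/p})² + 4√(E‖Z‖⁴) exp(-(r - E‖Z‖)²/(4v))`. -/
theorem stmt16 {Ω : Type*} [MeasurableSpace Ω] (μ : Measure Ω) [IsProbabilityMeasure μ]
    {p : ℕ} (hp : 0 < p)
    (Z : Ω → EuclideanSpace ℝ (Fin p)) (hZ : Measurable Z) (hZ4 : MemLp Z 4 μ)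
    (v : ℝ) (hv : 0 < v)
    (htail : ∀ t : ℝ, 0 < t →
      (μ {ω | (∫ ω', ‖Z ω'‖ ∂μ) + t < ‖Z ω‖}).toReal ≤ Real.exp (-t ^ 2 / (2 * v)))
    (r : ℝ) (hr : (∫ ω', ‖Z ω'‖ ∂μ) < r) (k : ℕ) (hk : 0 < k) :
    ∃ q : EuclideanSpace ℝ (Fin p) → Fin (k + 1), Measurable q ∧
      ∫ ω, ‖Z ω - (μ[Z | MeasurableSpace.comap (fun ω => q (Z ω)) inferInstance]) ω‖ ^ 2 ∂μ
        ≤ 4 * (3 * r * (k : ℝ) ^ (-(1 : ℝ) / p)) ^ 2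
          + 4 * Real.sqrt (∫ ω, ‖Z ω‖ ^ 4 ∂μ)
              * Real.exp (-(r - ∫ ω', ‖Z ω'‖ ∂μ) ^ 2 / (4 * v)) := by
  classical
  have hW0 : 0 ≤ ∫ ω', ‖Z ω'‖ ∂μ := integral_nonneg fun _ => norm_nonneg _
  have hr0 : 0 < r := lt_of_le_of_lt hW0 hr
  have hkpos : (0:ℝ) < (k:ℝ) := by exact_mod_cast hk
  have hppos : (0:ℝ) < (p:ℝ) := by exact_mod_cast hp
  set ε : ℝ := 3 * r * (k:ℝ) ^ (-(1:ℝ)/p) with hεdef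
  have hεpos : 0 < ε := by
    have := Real.rpow_pos_of_pos hkpos (-(1:ℝ)/p)
    positivity
  -- covering
  have hcov : ∃ c : Fin k → EuclideanSpace ℝ (Fin p), ∀ z, ‖z‖ ≤ r → ∃ i, dist z (c i) < ε := by
    by_cases hεr : r < ε
    · refine ⟨fun _ => 0, fun z hz => ⟨⟨0, hk⟩, ?_⟩⟩
      rw [dist_zero_right]
      linarith
    · push_neg at hεr
      apply exists_net hεpos hr0 k hk
      have hmul : (k:ℝ) ^ ((1:ℝ)/p) * (k:ℝ) ^ (-(1:ℝ)/p) = 1 := by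
        rw [← Real.rpow_add hkpos, show (1:ℝ)/p + -(1:ℝ)/p = 0 by ring, Real.rpow_zero]
      have h1 : (ε + 2*r)/ε ≤ (k:ℝ) ^ ((1:ℝ)/p) := by
        rw [div_le_iff₀ hεpos]
        calc ε + 2*r ≤ 3*r := by linarith
          _ = (k:ℝ) ^ ((1:ℝ)/p) * ε := by
              rw [hεdef]
              rw [show (k:ℝ) ^ ((1:ℝ)/p) * (3 * r * (k:ℝ) ^ (-(1:ℝ)/p))
                = 3 * r * ((k:ℝ) ^ ((1:ℝ)/p) * (k:ℝ) ^ (-(1:ℝ)/p)) by ring, hmul, mul_one]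
      calc ((ε + 2*r)/ε) ^ p ≤ ((k:ℝ) ^ ((1:ℝ)/p)) ^ p := by
            apply pow_le_pow_left₀ (by positivity) h1
        _ = (k:ℝ) := by
            rw [← Real.rpow_natCast ((k:ℝ) ^ ((1:ℝ)/p)) p, ← Real.rpow_mul hkpos.le]
            rw [show (1:ℝ)/p * p = 1 by field_simp]
            exact Real.rpow_one _
  obtain ⟨q, c, hq, hlast, hmem⟩ := exists_quantizer hεpos hr0 k hcov
  refine ⟨q, hq, ?_⟩
  -- setup
  set Y : Ω → Fin (k+1) := fun ω => q (Z ω) with hYdef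
  have hYmeas : Measurable Y := hq.comp hZ
  set A : Fin (k+1) → Set Ω := fun i => Y ⁻¹' {i} with hAdef
  have hAmeas : ∀ i, MeasurableSet (A i) := fun i => hYmeas (measurableSet_singleton i)
  set w : Fin (k+1) → EuclideanSpace ℝ (Fin p) :=
    fun i => (μ (A i)).toReal⁻¹ • ∫ x in A i, Z x ∂μ with hwdef
  set G : Ω → EuclideanSpace ℝ (Fin p) := fun ω => w (Y ω) with hGdef
  have hZint : Integrable Z μ := hZ4.integrable (by norm_num)
  have hce : μ[Z | MeasurableSpace.comap Y inferInstance] =ᵐ[μ] G :=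
    condexp_comap_discrete μ Y hYmeas Z hZint
  have hIcongr : ∫ ω, ‖Z ω - (μ[Z | MeasurableSpace.comap Y inferInstance]) ω‖ ^ 2 ∂μ
      = ∫ ω, ‖Z ω - G ω‖ ^ 2 ∂μ :=
    integral_congr_ae (hce.mono fun ω h => by simp only [h])
  rw [hIcongr]
  -- integrability facts
  have hZ2 : MemLp Z 2 μ := hZ4.mono_exponent (by norm_num)
  have hGmeas : Measurable G := (measurable_from_top (f := w)).comp hYmeas
  have hGbdd : ∀ ω, ‖G ω‖ ≤ ∑ i : Fin (k+1), ‖w i‖ := fun ω =>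
    Finset.single_le_sum (f := fun i => ‖w i‖) (fun i _ => norm_nonneg _) (Finset.mem_univ (Y ω))
  have hGL2 : MemLp G 2 μ :=
    MemLp.of_bound hGmeas.aestronglyMeasurable _ (Filter.Eventually.of_forall hGbdd)
  have hsubL2 : MemLp (fun ω => Z ω - G ω) 2 μ := hZ2.sub hGL2
  have h2t : ((2:ℝ≥0∞)).toReal = ((2:ℕ):ℝ) := by norm_num
  have h4t : ((4:ℝ≥0∞)).toReal = ((4:ℕ):ℝ) := by norm_num
  have hint2 : Integrable (fun ω => ‖Z ω - G ω‖ ^ 2) μ := by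
    have h := hsubL2.integrable_norm_rpow two_ne_zero ENNReal.ofNat_ne_top
    simp_rw [h2t, Real.rpow_natCast] at h
    exact h
  have hZnormInt : Integrable (fun ω => ‖Z ω‖) μ := hZint.norm
  have hZsqInt : Integrable (fun ω => ‖Z ω‖ ^ 2) μ := by
    have h := hZ2.integrable_norm_rpow two_ne_zero ENNReal.ofNat_ne_top
    simp_rw [h2t, Real.rpow_natCast] at h
    exact h
  have hZ4Int : Integrable (fun ω => ‖Z ω‖ ^ 4) μ := by
    have h := hZ4.integrable_norm_rpow (by norm_num) (by norm_num)
    simp_rw [h4t, Real.rpow_natCast] at h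
    exact h
  have hZsqL2 : MemLp (fun ω => ‖Z ω‖ ^ 2) 2 μ := by
    have h := hZ4.norm_rpow_div 2
    have h42 : ((4:ℝ≥0∞) / 2) = 2 := by
      rw [eq_comm, ENNReal.eq_div_iff (by norm_num) (by norm_num)]
      norm_num
    rw [h42] at h
    simp_rw [h2t, Real.rpow_natCast] at h
    exact h
  -- overflow cell
  set S : Set Ω := A (Fin.last k) with hSdef
  have hS_eq : S = {ω | r < ‖Z ω‖} := by
    ext ω
    simp only [hSdef, hAdef, Set.mem_preimage, Set.mem_singleton_iff, Set.mem_setOf_eq]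
    exact hlast (Z ω)
  have hSmeas : MeasurableSet S := hAmeas _
  have hsplit : ∫ ω, ‖Z ω - G ω‖ ^ 2 ∂μ
      = (∫ ω in S, ‖Z ω - G ω‖ ^ 2 ∂μ) + ∫ ω in Sᶜ, ‖Z ω - G ω‖ ^ 2 ∂μ :=
    (integral_add_compl hSmeas hint2).symm
  -- a.e. positive cells
  have hnull : ∀ᵐ ω ∂μ, μ (A (Y ω)) ≠ 0 := by
    have hN : μ (⋃ (i : Fin (k+1)) (_ : μ (A i) = 0), A i) = 0 :=
      measure_iUnion_null fun i => measure_iUnion_null fun h => h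
    filter_upwards [compl_mem_ae_iff.mpr hN] with ω hω
    intro hc
    exact hω (Set.mem_iUnion.mpr ⟨Y ω, Set.mem_iUnion.mpr ⟨hc, rfl⟩⟩)
  -- near-cell bound
  have hv_near : ∀ i : Fin k, μ (A i.castSucc) ≠ 0 → ‖w i.castSucc - c i‖ ≤ ε := by
    intro i h0
    set a : ℝ := (μ (A i.castSucc)).toReal with hadef
    have ha : 0 < a := ENNReal.toReal_pos h0 (measure_ne_top μ _)
    have hptw : ∀ x ∈ A i.castSucc, ‖Z x - c i‖ ≤ ε := by
      intro x hx
      have hqx : q (Z x) = Fin.castSucc i := hx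
      have := hmem (Z x) i hqx
      rw [← dist_eq_norm]
      exact this.le
    have hci : IntegrableOn (fun _ : Ω => c i) (A i.castSucc) μ :=
      integrableOn_const (measure_ne_top μ _)
    have hIsub : ∫ x in A i.castSucc, (Z x - c i) ∂μ
        = (∫ x in A i.castSucc, Z x ∂μ) - a • c i := by
      rw [integral_sub hZint.integrableOn hci, setIntegral_const, measureReal_def]
    have hnorm : ‖∫ x in A i.castSucc, (Z x - c i) ∂μ‖ ≤ ε * a := by
      apply norm_setIntegral_le_of_norm_le_const (measure_lt_top μ _) hptw
    have hwci : w i.castSucc - c i = a⁻¹ • ∫ x in A i.castSucc, (Z x - c i) ∂μ := by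
      rw [hIsub, smul_sub, smul_smul, inv_mul_cancel₀ ha.ne', one_smul, hwdef]
    rw [hwci, norm_smul, Real.norm_eq_abs, abs_of_pos (inv_pos.mpr ha)]
    calc a⁻¹ * ‖∫ x in A i.castSucc, (Z x - c i) ∂μ‖ ≤ a⁻¹ * (ε * a) :=
          mul_le_mul_of_nonneg_left hnorm (inv_pos.mpr ha).le
      _ = ε := by field_simp
  -- bound on Sᶜ
  have hptSc : ∀ᵐ ω ∂μ, ω ∈ Sᶜ → ‖Z ω - G ω‖ ^ 2 ≤ 4 * ε ^ 2 := by
    filter_upwards [hnull] with ω hω hSc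
    have hb : ‖Z ω‖ ≤ r := by
      by_contra hcon
      push_neg at hcon
      exact hSc (by rw [hS_eq]; exact hcon)
    obtain ⟨i, hi⟩ : ∃ i, Y ω = Fin.castSucc i := by
      rcases (Y ω).eq_castSucc_or_eq_last with ⟨i, hi⟩ | h
      · exact ⟨i, hi⟩
      · exact absurd ((hlast (Z ω)).mp h) (not_lt.mpr hb)
    have hd : dist (Z ω) (c i) < ε := hmem (Z ω) i hi
    have hμi : μ (A i.castSucc) ≠ 0 := by rw [← hi]; exact hω
    have hvn := hv_near i hμi
    have hGω : G ω = w i.castSucc := by rw [hGdef]; simp only; rw [hi]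
    have htri : ‖Z ω - G ω‖ ≤ 2 * ε := by
      rw [hGω]
      calc ‖Z ω - w i.castSucc‖ = ‖(Z ω - c i) + (c i - w i.castSucc)‖ := by abel_nf
        _ ≤ ‖Z ω - c i‖ + ‖c i - w i.castSucc‖ := norm_add_le _ _
        _ ≤ ε + ε := by
            rw [← dist_eq_norm, norm_sub_rev]
            exact add_le_add hd.le hvn
        _ = 2 * ε := by ring
    calc ‖Z ω - G ω‖ ^ 2 ≤ (2*ε) ^ 2 := by
          apply pow_le_pow_left₀ (norm_nonneg _) htri
      _ = 4 * ε ^ 2 := by ring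
  have hScBound : ∫ ω in Sᶜ, ‖Z ω - G ω‖ ^ 2 ∂μ ≤ 4 * ε ^ 2 := by
    have h1 : ∫ ω in Sᶜ, ‖Z ω - G ω‖ ^ 2 ∂μ ≤ ∫ _ω in Sᶜ, 4 * ε ^ 2 ∂μ := by
      apply integral_mono_ae hint2.integrableOn (integrable_const _)
      exact (ae_restrict_iff' hSmeas.compl).mpr hptSc
    have h2 : ∫ _ω in Sᶜ, 4 * ε ^ 2 ∂μ = (μ Sᶜ).toReal * (4 * ε ^ 2) := by
      rw [setIntegral_const, smul_eq_mul, measureReal_def]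
    rw [h2] at h1
    refine h1.trans ?_
    have : (μ Sᶜ).toReal ≤ 1 := by
      have := prob_le_one (μ := μ) (s := Sᶜ)
      exact_mod_cast ENNReal.toReal_le_of_le_ofReal zero_le_one (by simpa using this)
    nlinarith [sq_nonneg ε, hεpos]
  -- bound on S
  have hSBound : ∫ ω in S, ‖Z ω - G ω‖ ^ 2 ∂μ
      ≤ 4 * Real.sqrt (∫ ω, ‖Z ω‖ ^ 4 ∂μ)
          * Real.exp (-(r - ∫ ω', ‖Z ω'‖ ∂μ) ^ 2 / (4 * v)) := by
    have hM4 : 0 ≤ ∫ ω, ‖Z ω‖ ^ 4 ∂μ := integral_nonneg fun ω => by positivity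
    by_cases hS0 : μ S = 0
    · have : μ.restrict S = 0 := Measure.restrict_eq_zero.mpr hS0
      rw [this]
      simp only [integral_zero_measure]
      positivity
    · set a : ℝ := (μ S).toReal with hadef
      have ha : 0 < a := ENNReal.toReal_pos hS0 (measure_ne_top μ _)
      set u : EuclideanSpace ℝ (Fin p) := w (Fin.last k) with hudef
      have hGS : ∀ ω ∈ S, G ω = u := by
        intro ω hω
        have : Y ω = Fin.last k := hω
        rw [hGdef]; simp only; rw [this]
      set L1 : ℝ := ∫ x in S, ‖Z x‖ ∂μ with hL1def
      set L2 : ℝ := ∫ x in S, ‖Z x‖ ^ 2 ∂μ with hL2def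
      have hL1 : 0 ≤ L1 := integral_nonneg fun _ => norm_nonneg _
      have hL2 : 0 ≤ L2 := integral_nonneg fun _ => sq_nonneg _
      have hu : ‖u‖ * a ≤ L1 := by
        have h1 : ‖u‖ ≤ a⁻¹ * L1 := by
          rw [hudef, hwdef]
          simp only
          rw [norm_smul, Real.norm_eq_abs, abs_of_pos (inv_pos.mpr ha)]
          exact mul_le_mul_of_nonneg_left (norm_integral_le_integral_norm _) (inv_pos.mpr ha).le
        calc ‖u‖ * a ≤ (a⁻¹ * L1) * a := mul_le_mul_of_nonneg_right h1 ha.le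
          _ = L1 := by field_simp
      have CS1 : L1 ^ 2 ≤ a * L2 :=
        cs_helper μ (fun ω => norm_nonneg (Z ω)) hZ2.norm S
      have hptS : ∀ x ∈ S, ‖Z x - G x‖ ^ 2 ≤ ‖Z x‖ ^ 2 + 2 * ‖u‖ * ‖Z x‖ + ‖u‖ ^ 2 := by
        intro x hx
        rw [hGS x hx]
        have h1 : ‖Z x - u‖ ≤ ‖Z x‖ + ‖u‖ := norm_sub_le _ _
        nlinarith [norm_nonneg (Z x - u), norm_nonneg (Z x), norm_nonneg u]
      have hrhsInt : IntegrableOn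
          (fun x => ‖Z x‖ ^ 2 + 2 * ‖u‖ * ‖Z x‖ + ‖u‖ ^ 2) S μ := by
        apply Integrable.integrableOn
        exact (hZsqInt.add (hZnormInt.const_mul (2 * ‖u‖))).add (integrable_const _)
      have hstep1 : ∫ ω in S, ‖Z ω - G ω‖ ^ 2 ∂μ
          ≤ L2 + 2 * ‖u‖ * L1 + ‖u‖ ^ 2 * a := by
        have hmono := setIntegral_mono_on hint2.integrableOn hrhsInt hSmeas hptS
        refine hmono.trans (le_of_eq ?_)
        have hi1 : IntegrableOn (fun x => ‖Z x‖ ^ 2 + 2 * ‖u‖ * ‖Z x‖) S μ :=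
          (hZsqInt.add (hZnormInt.const_mul (2 * ‖u‖))).integrableOn
        have hi2 : IntegrableOn (fun _ : Ω => ‖u‖ ^ 2) S μ :=
          (integrable_const _).integrableOn
        rw [integral_add hi1 hi2,
          integral_add hZsqInt.integrableOn (hZnormInt.const_mul (2 * ‖u‖)).integrableOn,
          setIntegral_const, integral_const_mul, smul_eq_mul, measureReal_def]
        ring
      have hb0 : 0 ≤ ‖u‖ := norm_nonneg u
      have h2 : ‖u‖ * L1 ≤ L2 := by nlinarith
      have h3 : ‖u‖ ^ 2 * a ≤ L2 := by nlinarith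
      have hstep2 : ∫ ω in S, ‖Z ω - G ω‖ ^ 2 ∂μ ≤ 4 * L2 := by linarith
      -- L2 ≤ sqrt(a) * sqrt(M4)
      have CS2 : L2 ^ 2 ≤ a * ∫ x in S, (‖Z x‖ ^ 2) ^ 2 ∂μ :=
        cs_helper μ (fun ω => sq_nonneg ‖Z ω‖) hZsqL2 S
      have h44 : ∫ x in S, (‖Z x‖ ^ 2) ^ 2 ∂μ = ∫ x in S, ‖Z x‖ ^ 4 ∂μ := by
        apply integral_congr_ae
        filter_upwards with x
        ring
      have hle4 : ∫ x in S, ‖Z x‖ ^ 4 ∂μ ≤ ∫ ω, ‖Z ω‖ ^ 4 ∂μ :=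
        setIntegral_le_integral hZ4Int (Filter.Eventually.of_forall fun ω => by positivity)
      have hL2sq : L2 ^ 2 ≤ a * ∫ ω, ‖Z ω‖ ^ 4 ∂μ := by
        rw [h44] at CS2
        exact CS2.trans (mul_le_mul_of_nonneg_left hle4 ha.le)
      have hL2le : L2 ≤ Real.sqrt a * Real.sqrt (∫ ω, ‖Z ω‖ ^ 4 ∂μ) := by
        rw [← Real.sqrt_mul ha.le]
        exact (Real.le_sqrt hL2 (mul_nonneg ha.le hM4)).mpr hL2sq
      -- tail bound
      have hta : a ≤ Real.exp (-(r - ∫ ω', ‖Z ω'‖ ∂μ) ^ 2 / (2 * v)) := by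
        have hSset : S = {ω | (∫ ω', ‖Z ω'‖ ∂μ) + (r - ∫ ω', ‖Z ω'‖ ∂μ) < ‖Z ω‖} := by
          rw [hS_eq]
          congr 1
          ext ω
          rw [show (∫ ω', ‖Z ω'‖ ∂μ) + (r - ∫ ω', ‖Z ω'‖ ∂μ) = r by ring]
        rw [hadef, hSset]
        exact htail _ (by linarith)
      have hsqrt_a : Real.sqrt a ≤ Real.exp (-(r - ∫ ω', ‖Z ω'‖ ∂μ) ^ 2 / (4 * v)) := by
        have h := Real.sqrt_le_sqrt hta
        rw [← Real.exp_half] at h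
        calc Real.sqrt a ≤ Real.exp (-(r - ∫ ω', ‖Z ω'‖ ∂μ) ^ 2 / (2*v) / 2) := h
          _ = Real.exp (-(r - ∫ ω', ‖Z ω'‖ ∂μ) ^ 2 / (4*v)) := by
              rw [show -(r - ∫ ω', ‖Z ω'‖ ∂μ) ^ 2 / (2*v) / 2
                = -(r - ∫ ω', ‖Z ω'‖ ∂μ) ^ 2 / (4*v) by ring]
      calc ∫ ω in S, ‖Z ω - G ω‖ ^ 2 ∂μ ≤ 4 * L2 := hstep2
        _ ≤ 4 * (Real.sqrt a * Real.sqrt (∫ ω, ‖Z ω‖ ^ 4 ∂μ)) := by linarith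
        _ ≤ 4 * Real.sqrt (∫ ω, ‖Z ω‖ ^ 4 ∂μ)
              * Real.exp (-(r - ∫ ω', ‖Z ω'‖ ∂μ) ^ 2 / (4 * v)) := by
            have hs4 : 0 ≤ Real.sqrt (∫ ω, ‖Z ω‖ ^ 4 ∂μ) := Real.sqrt_nonneg _
            nlinarith [Real.sqrt_nonneg a, hsqrt_a]
  rw [hsplit]
  have : 4 * (3 * r * (k:ℝ) ^ (-(1:ℝ)/p)) ^ 2 = 4 * ε ^ 2 := by rw [hεdef]
  rw [this]
  linarith
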